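/- The lattice N = S₁₁ ⊕ (6) admits no nontrivial even overlattices: if x ∈ N ⊗ ℚ satisfies (x, m) ∈ ℤ for all m ∈ N (i.e., x lies in the dual lattice N^∨) and (x, x) ∈ 2ℤ, then x ∈ N. (Equivalently, the discriminant group N^∨/N contains no nonzero isotropic elements for the discriminant form.) -/

import Mathlib

open Matrix

/-!
The lattice `N = S₁₁ ⊕ (6)` admits no nontrivial even overlattice:  any vector
of the dual lattice `N^∨` with even square already lies in `N`.
-/

/-- Gram matrix of `N = S₁₁ ⊕ (6)`: block-diagonal with blocks the Gram matrix
`M` of `S₁₁` and `[6]`. -/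
def GN : Matrix (Fin 21) (Fin 21) ℤ :=
  !![-4, 1, -2, -2, -1, 1, -1, 1, -1, -1, 2, 1, -1, 2, -1, -2, -2, 2, 1, -1, 0;
     1, -4, -1, -1, -1, -1, -1, 1, -1, 2, -1, -2, 2, 0, -1, 0, 0, -1, -2, 1, 0;
     -2, -1, -4, -2, -1, -1, 0, 1, 0, -1, 1, 0, -1, 2, -2, -1, -1, 0, 0, 1, 0;
     -2, -1, -2, -4, 0, 0, -2, 0, -1, 0, 2, 1, 0, 1, 0, 0, -1, 1, 0, -1, 0;
     -1, -1, -1, 0, -4, 1, -1, 2, -2, -1, 1, 0, -1, 0, -2, -2, 0, 1, 1, -1, 0;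
     1, -1, -1, 0, 1, -4, 0, -1, 0, 1, -2, -1, 0, -1, -1, 0, -1, 0, -1, 1, 0;
     -1, -1, 0, -2, -1, 0, -4, 1, -2, 1, 1, 1, 0, -1, 0, -1, 0, 2, 0, -2, 0;
     1, 1, 1, 0, 2, -1, 1, -4, 0, 0, -1, 1, 1, 0, 2, 1, 0, -1, 1, 0, 0;
     -1, -1, 0, -1, -2, 0, -2, 0, -4, 0, 0, 1, 1, 0, -1, -2, 0, 2, 0, -2, 0;
     -1, 2, -1, 0, -1, 1, 1, 0, 0, -4, 1, 1, -2, 1, 0, 0, 1, 1, 1, 0, 0;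
     2, -1, 1, 2, 1, -2, 1, -1, 0, 1, -4, -2, 2, -1, 0, 0, 0, -1, -2, 1, 0;
     1, -2, 0, 1, 0, -1, 1, 1, 1, 1, -2, -4, 1, 0, -1, 0, -1, -1, -2, 2, 0;
     -1, 2, -1, 0, -1, 0, 0, 1, 1, -2, 2, 1, -4, 0, -1, 0, 0, 1, 2, 0, 0;
     2, 0, 2, 1, 0, -1, -1, 0, 0, 1, -1, 0, 0, -4, 1, 1, 1, 0, 0, -1, 0;
     -1, -1, -2, 0, -2, -1, 0, 2, -1, 0, 0, -1, -1, 1, -4, -2, -1, 1, 0, 0, 0;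
     -2, 0, -1, 0, -2, 0, -1, 1, -2, 0, 0, 0, 0, 1, -2, -4, -2, 2, 0, -1, 0;
     -2, 0, -1, -1, 0, -1, 0, 0, 0, 1, 0, -1, 0, 1, -1, -2, -4, 1, 0, 0, 0;
     2, -1, 0, 1, 1, 0, 2, -1, 2, 1, -1, -1, 1, 0, 1, 2, 1, -4, 0, 2, 0;
     1, -2, 0, 0, 1, -1, 0, 1, 0, 1, -2, -2, 2, 0, 0, 0, 0, 0, -4, 1, 0;
     -1, 1, 1, -1, -1, 1, -2, 0, -2, 0, 1, 2, 0, -1, 0, -1, 0, 2, 1, -4, 0;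
     0, 0, 0, 0, 0, 0, 0, 0, 0, 0, 0, 0, 0, 0, 0, 0, 0, 0, 0, 0, 6]

/-- `GN` as a rational matrix. -/
def GNQ : Matrix (Fin 21) (Fin 21) ℚ := GN.map (Int.cast : ℤ → ℚ)


def Usnf : Matrix (Fin 21) (Fin 21) ℤ :=
  !![1, 0, 0, 0, 0, 0, 0, 0, 0, 0, 0, 0, 0, 0, 0, 0, 0, 0, 0, 0, 0;
  1, 0, 1, 0, 0, 0, 0, 0, 0, 0, 0, 0, 0, 0, 0, 0, 0, 0, 0, 0, 0;
  -2, 0, -3, 1, 0, 0, 0, 0, 0, 0, 0, 0, 0, 0, 0, 0, 0, 0, 0, 0, 0;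
  3, 0, 4, -2, 1, 0, 0, 0, 0, 0, 0, 0, 0, 0, 0, 0, 0, 0, 0, 0, 0;
  -3, 0, -4, 2, 0, 0, 0, 1, 0, 0, 0, 0, 0, 0, 0, 0, 0, 0, 0, 0, 0;
  -1, 0, 0, 0, 1, 0, 0, 0, 0, 0, 0, 0, 1, 0, 0, 0, 0, 0, 0, 0, 0;
  -6, 0, -1, 0, 4, 0, 0, 0, 0, 0, 0, 0, 4, 0, 0, 0, 0, 0, 0, 1, 0;
  114, 1, 14, 3, -74, 0, 0, 3, 0, 0, 0, 0, -74, 0, 0, 0, 0, 0, 0, -22, 0;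
  -96, -3, -12, 0, 63, 0, 0, -3, 0, 0, 1, 0, 61, 0, 0, 0, 0, 0, 0, 17, 0;
  -61, -3, -6, 0, 39, 0, 0, -2, 0, 0, 0, 1, 37, 0, 0, 0, 0, 0, 0, 12, 0;
  126, 8, 19, -6, -87, 0, 0, 5, 0, 1, -5, 2, -80, 0, 0, 0, 0, 0, 0, -16, 0;
  62, 3, 11, -4, -45, 0, 0, 2, 1, 0, -4, 2, -41, 0, 0, 0, 0, 0, 0, -7, 0;
  1701, 81, 297, -104, -1227, 0, 0, 56, 25, 0, -105, 52, -1122, 0, 0, 0, 0, 0, 1, -197, 0;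
  2139, 101, 373, -130, -1541, 0, 0, 71, 31, 0, -132, 65, -1411, 1, 0, 0, 0, 0, 2, -249, 1;
  -141331, -6671, -24645, 8589, 101809, 0, 0, -4696, -2045, 0, 8723, -4294, 93229, -71, 0, 1, 0, 0, -137, 16454, -67;
  -511488, -24134, -89208, 31082, 368510, 0, 0, -16964, -7421, 3, 31569, -15550, 337436, -243, 0, -1, 1, 7, -462, 59553, -242;
  -8159, -390, -1419, 498, 5864, 1, 0, -280, -113, -2, 504, -245, 5372, -9, 0, 1, -1, -2, -17, 948, -4;
  171318, 8118, 29855, -10427, -123333, -10, 0, 5748, 2450, 12, -10577, 5188, -112948, 119, 1, -7, 7, 11, 221, -19934, 82;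
  -42306957, -2001998, -7374102, 2573364, 30465054, 1007, 1, -1413447, -607838, -2199, 2611672, -1282760, 27898722, -25718, 3, 963, -1069, -1837, -48787, 4923596, -20171;
  -5168557, -244534, -900897, 314362, 3721865, 115, 3, -172656, -74270, -242, 319056, -156727, 3408367, -3121, 9, 122, -120, -213, -5943, 601517, -2464;
  3162990, 149484, 551382, -192306, -2277696, -42, -12, 105582, 45492, 54, -195228, 95964, -2085936, 1836, -36, -90, 36, 90, 3576, -368148, 1507]

def Vsnf : Matrix (Fin 21) (Fin 21) ℤ :=
  !![0, 0, 0, 0, 0, 0, 0, 0, 0, 0, -1, -21, 3, -135, -6, 37, 649, -2, 1049, -110878, -160548;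
  1, -1, -1, -1, -2, -11, 19, 0, -5, 3, 0, 52, -7, 312, 21, -110, -1924, -5, -2582, 272938, 395202;
  0, 0, 0, 0, 0, 0, 0, 0, 0, 0, 0, 0, 0, 0, -4, 8, 132, 4, -19, 1998, 2898;
  0, 0, 0, 0, 0, 0, 0, 0, 1, -1, 0, -5, 1, -49, 0, 6, 108, -4, 352, -37199, -53874;
  0, 0, 0, 0, 0, 0, 0, 0, 0, 0, 0, 0, 0, -1, 0, 11, 200, 2, 196, -20723, -30006;
  0, 0, 1, 1, 2, 12, -18, -1, 0, 0, 0, -12, 1, -35, -1, 12, 214, -2, 441, -46609, -67494;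
  0, -1, 0, 1, 2, 10, -16, 1, 5, -3, -1, -37, 10, -530, -36, 178, 3104, 6, 4276, -452000, -654468;
  0, 0, 0, 0, 0, 0, -1, 0, -1, 0, -1, 6, 4, -261, -17, 88, 1536, 3, 2089, -220822, -319734;
  0, 0, 0, 0, 1, 7, -12, -1, 1, 0, 1, -28, -2, 187, 11, -62, -1084, 1, -1643, 173668, 251466;
  0, 0, 0, 0, 0, 0, 0, 0, 0, 0, 0, 0, 0, 0, 0, 0, 0, 0, 18, -1901, -2748;
  0, 0, 0, 0, 0, 1, 2, 0, 0, 0, 0, 6, -2, 112, 8, -42, -734, -2, -990, 104650, 151524;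
  0, 0, 0, 1, 3, 14, -26, -1, 2, -2, -1, -34, 7, -352, -23, 110, 1915, 1, 2762, -291955, -422742;
  0, 0, 0, 0, 0, 0, 0, 0, 0, 0, 0, 1, 0, -2, 1, -12, -214, -2, -229, 24210, 35052;
  0, 0, 0, 0, 0, 0, 0, 0, 0, 0, 0, 0, 0, 0, 0, 0, -1, 0, -15, 1585, 2298;
  0, 0, 0, 0, 0, 0, 0, 0, 0, 0, 0, 0, 0, 0, 1, 5, 94, 2, 30, -3176, -4590;
  0, 0, 0, 0, 0, 0, 0, 1, 2, -2, -1, -2, 8, -488, -29, 140, 2436, -4, 3779, -399443, -578388;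
  0, 0, 0, 0, 0, 0, 0, 0, 0, 1, 2, 25, -9, 495, 29, -147, -2563, 3, -3905, 412765, 597678;
  0, 0, 0, 0, 0, 0, -3, 2, 8, -4, 0, -65, 8, -342, -20, 101, 1764, 1, 2558, -270390, -391512;
  0, 0, 0, 0, 0, 0, 0, 0, 0, 0, 0, -6, 2, -112, -7, 40, 702, 3, 877, -92709, -134232;
  0, 0, 0, 0, 0, 0, 0, 0, 0, 0, 0, 0, -1, 62, 4, -24, -421, -1, -565, 59725, 86478;
  0, 0, 0, 0, 0, 0, 0, 0, 0, 0, 0, 0, 0, -13, -1, 5, 87, 0, 128, -13530, -19591]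

def Bhalf : Matrix (Fin 21) (Fin 21) ℤ :=
  !![-2, 0, 0, 0, 0, 0, 0, 0, 0, 0, 0, 0, 0, 0, 0, 0, 0, 0, 0, 0, 0;
  1, -2, 0, 0, 0, 0, 0, 0, 0, 0, 0, 0, 0, 0, 0, 0, 0, 0, 0, 0, 0;
  -2, -1, -2, 0, 0, 0, 0, 0, 0, 0, 0, 0, 0, 0, 0, 0, 0, 0, 0, 0, 0;
  -2, -1, -2, -2, 0, 0, 0, 0, 0, 0, 0, 0, 0, 0, 0, 0, 0, 0, 0, 0, 0;
  -1, -1, -1, 0, -2, 0, 0, 0, 0, 0, 0, 0, 0, 0, 0, 0, 0, 0, 0, 0, 0;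
  1, -1, -1, 0, 1, -2, 0, 0, 0, 0, 0, 0, 0, 0, 0, 0, 0, 0, 0, 0, 0;
  -1, -1, 0, -2, -1, 0, -2, 0, 0, 0, 0, 0, 0, 0, 0, 0, 0, 0, 0, 0, 0;
  1, 1, 1, 0, 2, -1, 1, -2, 0, 0, 0, 0, 0, 0, 0, 0, 0, 0, 0, 0, 0;
  -1, -1, 0, -1, -2, 0, -2, 0, -2, 0, 0, 0, 0, 0, 0, 0, 0, 0, 0, 0, 0;
  -1, 2, -1, 0, -1, 1, 1, 0, 0, -2, 0, 0, 0, 0, 0, 0, 0, 0, 0, 0, 0;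
  2, -1, 1, 2, 1, -2, 1, -1, 0, 1, -2, 0, 0, 0, 0, 0, 0, 0, 0, 0, 0;
  1, -2, 0, 1, 0, -1, 1, 1, 1, 1, -2, -2, 0, 0, 0, 0, 0, 0, 0, 0, 0;
  -1, 2, -1, 0, -1, 0, 0, 1, 1, -2, 2, 1, -2, 0, 0, 0, 0, 0, 0, 0, 0;
  2, 0, 2, 1, 0, -1, -1, 0, 0, 1, -1, 0, 0, -2, 0, 0, 0, 0, 0, 0, 0;
  -1, -1, -2, 0, -2, -1, 0, 2, -1, 0, 0, -1, -1, 1, -2, 0, 0, 0, 0, 0, 0;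
  -2, 0, -1, 0, -2, 0, -1, 1, -2, 0, 0, 0, 0, 1, -2, -2, 0, 0, 0, 0, 0;
  -2, 0, -1, -1, 0, -1, 0, 0, 0, 1, 0, -1, 0, 1, -1, -2, -2, 0, 0, 0, 0;
  2, -1, 0, 1, 1, 0, 2, -1, 2, 1, -1, -1, 1, 0, 1, 2, 1, -2, 0, 0, 0;
  1, -2, 0, 0, 1, -1, 0, 1, 0, 1, -2, -2, 2, 0, 0, 0, 0, 0, -2, 0, 0;
  -1, 1, 1, -1, -1, 1, -2, 0, -2, 0, 1, 2, 0, -1, 0, -1, 0, 2, 1, -2, 0;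
  0, 0, 0, 0, 0, 0, 0, 0, 0, 0, 0, 0, 0, 0, 0, 0, 0, 0, 0, 0, 3]

def Ed : Matrix (Fin 21) (Fin 21) ℤ :=
  Matrix.diagonal (fun j => if j = 19 then 6 else if j = 20 then 1 else 66)

def Wz : Matrix (Fin 21) (Fin 21) ℤ := Vsnf * Ed * Usnf

def v1 : Fin 21 → ℤ := fun i => Vsnf i 19
def v2 : Fin 21 → ℤ := fun i => Vsnf i 20

def h1 : Fin 21 → ℤ := ![0, 0, 0, 0, 0, -16115, 65575, 0, 0, 0, 0, 0, 0, 7380, -26868, 29520, -47653, 12079, 0, 0, -7380]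
def h2 : Fin 21 → ℤ := ![0, 0, 0, 0, 0, -3889, 15825, 0, 0, 0, 0, 0, 0, 1781, -6484, 7124, -11500, 2915, 0, 0, -1781]

set_option maxRecDepth 1000000 in
set_option maxHeartbeats 4000000 in
lemma F1 : Wz * GN = Matrix.diagonal (fun _ => (66:ℤ)) := by decide

set_option maxRecDepth 1000000 in
set_option maxHeartbeats 1000000 in
lemma F2 : GN = Bhalf + Bhalfᵀ := by decide

set_option maxRecDepth 1000000 in
set_option maxHeartbeats 1000000 in
lemma F3 : GN.mulVec v1 = (11:ℤ) • h1 := by decide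

set_option maxRecDepth 1000000 in
set_option maxHeartbeats 1000000 in
lemma F4 : GN.mulVec v2 = (66:ℤ) • h2 := by decide

set_option maxRecDepth 1000000 in
set_option maxHeartbeats 1000000 in
lemma F5 : GNᵀ = GN := by decide

set_option maxRecDepth 1000000 in
set_option maxHeartbeats 1000000 in
lemma P11 : v1 ⬝ᵥ GN.mulVec v1 = (-697609035332:ℤ) := by decide

set_option maxRecDepth 1000000 in
set_option maxHeartbeats 1000000 in
lemma P12 : v1 ⬝ᵥ GN.mulVec v2 = (-1010112898212:ℤ) := by decide

set_option maxRecDepth 1000000 in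
set_option maxHeartbeats 1000000 in
lemma P22 : v2 ⬝ᵥ GN.mulVec v2 = (-1462607299362:ℤ) := by decide

set_option maxRecDepth 1000000 in
set_option maxHeartbeats 4000000 in
lemma F6 : ∀ p : Fin 11, ∀ q : Fin 66,
    (36 * (-697609035332:ℤ) * (p:ℤ) * (p:ℤ) + 12 * (-1010112898212:ℤ) * (p:ℤ) * (q:ℤ)
      + (-1462607299362:ℤ) * (q:ℤ) * (q:ℤ)) % 8712 = 0 → (p:ℤ) = 0 ∧ (q:ℤ) = 0 := by decide

lemma GNQsymm : GNQᵀ = GNQ := by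
  rw [GNQ, ← Matrix.transpose_map, F5]

lemma symmZ (v w : Fin 21 → ℤ) : v ⬝ᵥ GN.mulVec w = w ⬝ᵥ GN.mulVec v := by
  rw [Matrix.dotProduct_mulVec, ← Matrix.mulVec_transpose, F5, dotProduct_comm]

theorem no_nontrivial_even_overlattice (x : Fin 21 → ℚ)
    (hdual : ∀ m : Fin 21 → ℤ, ∃ k : ℤ, x ⬝ᵥ GNQ.mulVec (fun i => (m i : ℚ)) = k)
    (heven : ∃ k : ℤ, x ⬝ᵥ GNQ.mulVec x = 2 * k) :
    ∀ i, ∃ n : ℤ, x i = n := by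
  classical
  -- Step 1: GNQ *ᵥ x is integral
  have hy : ∀ j : Fin 21, ∃ k : ℤ, (GNQ.mulVec x) j = k := by
    intro j
    obtain ⟨k, hk⟩ := hdual (Pi.single j 1)
    refine ⟨k, ?_⟩
    have hcast : (fun i => ((Pi.single j 1 : Fin 21 → ℤ) i : ℚ)) = Pi.single j (1:ℚ) := by
      funext i
      by_cases h : i = j <;> simp [Pi.single_apply, h]
    rw [hcast] at hk
    rw [Matrix.mulVec_single_one, show GNQ.col j = GNQᵀ j from rfl, GNQsymm] at hk
    rw [← hk]
    rw [Matrix.mulVec]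
    exact dotProduct_comm _ _
  choose y hyy using hy
  -- Step 2: 66 • x is the integer vector w = Wz *ᵥ y
  set w : Fin 21 → ℤ := Wz.mulVec y with hwdef
  have hGNQcast : GNQ = Wz.map (Int.cast : ℤ → ℚ) → True := fun _ => trivial
  have hWG : (Wz.map (Int.cast : ℤ → ℚ)) * GNQ = Matrix.diagonal (fun _ => (66:ℚ)) := by
    have h : (Wz * GN).map ⇑(Int.castRingHom ℚ)
        = (Matrix.diagonal fun _ => (66:ℤ)).map ⇑(Int.castRingHom ℚ) := by rw [F1]
    rw [Matrix.map_mul, Matrix.diagonal_map (by simp)] at h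
    simpa only [GNQ, Int.coe_castRingHom, Function.comp_def, Int.cast_ofNat] using h
  have hx66 : ∀ i, (66:ℚ) * x i = ((w i : ℤ) : ℚ) := by
    intro i
    have h1 : (Wz.map (Int.cast : ℤ → ℚ)).mulVec (GNQ.mulVec x)
        = (Matrix.diagonal (fun _ => (66:ℚ))).mulVec x := by
      rw [Matrix.mulVec_mulVec, hWG]
    have h2 : (GNQ.mulVec x) = fun j => ((y j : ℤ) : ℚ) := funext hyy
    have h3 := congrFun h1 i
    rw [h2] at h3
    rw [Matrix.mulVec_diagonal] at h3
    rw [← h3]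
    simp only [hwdef, Matrix.mulVec, dotProduct, Matrix.map_apply]
    push_cast
    rfl
  -- Step 3: decompose w
  set cv : Fin 21 → ℤ := Usnf.mulVec y with hcv
  set a : ℤ := cv 19 % 11 with hadef
  set s : ℤ := cv 19 / 11 with hsdef
  set b : ℤ := cv 20 % 66 with hbdef
  set t : ℤ := cv 20 / 66 with htdef
  set cpp : Fin 21 → ℤ := fun j => if j = 19 then s else if j = 20 then t else cv j with hcpp
  set u : Fin 21 → ℤ := Vsnf.mulVec cpp with hu
  have hEd : Ed.mulVec cv = (66:ℤ) • cpp + (6*a) • Pi.single 19 1 + b • Pi.single 20 1 := by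
    funext j
    have h19 : 11 * s + a = cv 19 := Int.mul_ediv_add_emod (cv 19) 11
    have h20 : 66 * t + b = cv 20 := Int.mul_ediv_add_emod (cv 20) 66
    simp only [Ed, Pi.add_apply, Pi.smul_apply, smul_eq_mul]
    rw [Matrix.mulVec_diagonal]
    by_cases hj19 : j = 19
    · subst hj19; simp only [hcpp, Pi.single_apply]; norm_num; omega
    · by_cases hj20 : j = 20
      · subst hj20; simp only [hcpp, Pi.single_apply]; norm_num [hj19]; omega
      · simp only [hcpp, Pi.single_apply, if_neg hj19, if_neg hj20]
        have : (19:Fin 21) ≠ j := fun h => hj19 h.symm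
        have : (20:Fin 21) ≠ j := fun h => hj20 h.symm
        simp [hj19, hj20, Ne.symm hj19, Ne.symm hj20]
  have hw : w = (66:ℤ) • u + (6*a) • v1 + b • v2 := by
    rw [hwdef, Wz, ← Matrix.mulVec_mulVec, ← Matrix.mulVec_mulVec, ← hcv, hEd]
    rw [Matrix.mulVec_add, Matrix.mulVec_add, Matrix.mulVec_smul, Matrix.mulVec_smul,
      Matrix.mulVec_smul, Matrix.mulVec_single_one, Matrix.mulVec_single_one]
    rfl
  -- Step 4: evenness gives the key congruence
  obtain ⟨k, hk⟩ := heven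
  have hq : w ⬝ᵥ GN.mulVec w = 8712 * k := by
    have hxw : (fun i => ((w i : ℤ) : ℚ)) = (66:ℚ) • x := by
      funext i; rw [← hx66 i]; rfl
    have hcast : ((w ⬝ᵥ GN.mulVec w : ℤ) : ℚ)
        = (fun i => ((w i : ℤ) : ℚ)) ⬝ᵥ GNQ.mulVec (fun i => ((w i : ℤ) : ℚ)) := by
      simp only [dotProduct, Matrix.mulVec, GNQ, Matrix.map_apply]
      push_cast
      rfl
    have : ((w ⬝ᵥ GN.mulVec w : ℤ) : ℚ) = ((8712 * k : ℤ) : ℚ) := by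
      rw [hcast, hxw, Matrix.mulVec_smul, dotProduct_smul, smul_dotProduct,
        hk]
      simp only [smul_eq_mul]
      push_cast
      ring
    exact_mod_cast this
  -- expand
  rw [hw] at hq
  simp only [Matrix.mulVec_add, Matrix.mulVec_smul, dotProduct_add,
    add_dotProduct, dotProduct_smul, smul_dotProduct,
    smul_eq_mul] at hq
  rw [symmZ v1 u, symmZ v2 u, symmZ v2 v1] at hq
  have e1 : u ⬝ᵥ GN.mulVec u = 2 * (u ⬝ᵥ Bhalf.mulVec u) := by
    conv_lhs => rw [F2]
    rw [Matrix.add_mulVec, dotProduct_add]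
    have : u ⬝ᵥ Bhalfᵀ.mulVec u = u ⬝ᵥ Bhalf.mulVec u := by
      rw [Matrix.mulVec_transpose, dotProduct_comm, ← Matrix.dotProduct_mulVec]
    rw [this]; ring
  have e3 : u ⬝ᵥ GN.mulVec v1 = 11 * (u ⬝ᵥ h1) := by
    rw [F3, dotProduct_smul, smul_eq_mul]
  have e4 : u ⬝ᵥ GN.mulVec v2 = 66 * (u ⬝ᵥ h2) := by
    rw [F4, dotProduct_smul, smul_eq_mul]
  rw [e1, e3, e4, P11, P12, P22] at hq
  -- Step 5: finite check
  have hbnds : 0 ≤ a ∧ a < 11 ∧ 0 ≤ b ∧ b < 66 :=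
    ⟨Int.emod_nonneg _ (by norm_num), Int.emod_lt_of_pos _ (by norm_num),
     Int.emod_nonneg _ (by norm_num), Int.emod_lt_of_pos _ (by norm_num)⟩
  obtain ⟨ha0, ha1, hb0, hb1⟩ := hbnds
  have hmod : (36 * (-697609035332:ℤ) * a * a + 12 * (-1010112898212:ℤ) * a * b + (-1462607299362:ℤ) * b * b) % 8712 = 0 := by
    have : 36 * (-697609035332:ℤ) * a * a + 12 * (-1010112898212:ℤ) * a * b + (-1462607299362:ℤ) * b * b
        = 8712 * (k - (u ⬝ᵥ Bhalf.mulVec u) - (u ⬝ᵥ h1) * a - (u ⬝ᵥ h2) * b) := by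
      linear_combination hq
    rw [this]
    omega
  have hfin := F6 ⟨a.toNat, by omega⟩ ⟨b.toNat, by omega⟩
  have hca : ((⟨a.toNat, by omega⟩ : Fin 11) : ℤ) = a := by
    simp [Int.toNat_of_nonneg ha0]
  have hcb : ((⟨b.toNat, by omega⟩ : Fin 66) : ℤ) = b := by
    simp [Int.toNat_of_nonneg hb0]
  rw [hca, hcb] at hfin
  obtain ⟨haz, hbz⟩ := hfin hmod
  -- Step 6: conclude
  intro i
  refine ⟨u i, ?_⟩
  have h66 := hx66 i
  rw [hw] at h66
  simp only [haz, hbz, Pi.add_apply, Pi.smul_apply, smul_eq_mul] at h66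
  push_cast at h66
  linarith
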